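/- Let G be a directed graph. The affine zero locus Z(G) of the incidence ideal is a ℂ-submodule of ℂ^{E(G)} if and only if the number of distinct directed cycles in G equals α(G). -/

import Mathlib

open MvPolynomial

/-- The `l`-th elementary symmetric polynomial in the finite set `s` of variables
(`1` for `l = 0`, `0` for `l > |s|`). -/
noncomputable def esymmOf (R : Type) [CommRing R] {E : Type} (s : Finset E) (l : ℕ) :
    MvPolynomial E R :=
  ∑ t ∈ s.powersetCard l, ∏ x ∈ t, X x

/-- The incidence ideal of the directed graph with edge-endpoint maps `src`, `tgt`:
the ideal generated by the incidence relations
`δ_{v,l} = e_l(edges out of v) - e_l(edges into v)` for all vertices `v` and all `l ≥ 1`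
(for `l > k_v` the relation `δ_{v,l}` is the zero polynomial, so this ideal is generated by
the `δ_{v,l}` with `1 ≤ l ≤ k_v`). -/
noncomputable def incidenceIdeal (R : Type) [CommRing R] {V E : Type}
    [Fintype E] [DecidableEq V] (src tgt : E → V) : Ideal (MvPolynomial E R) :=
  Ideal.span {f | ∃ (v : V) (l : ℕ), 1 ≤ l ∧
    f = esymmOf R (Finset.univ.filter fun x => src x = v) l
      - esymmOf R (Finset.univ.filter fun x => tgt x = v) l}

/-- The affine zero locus in `ℂ^E` of an ideal of `ℤ[E]`. -/
def zeroLocus {E : Type} (I : Ideal (MvPolynomial E ℤ)) : Set (E → ℂ) :=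
  {p | ∀ f ∈ I, MvPolynomial.aeval p f = 0}

/-- A directed cycle in the directed graph with edge-endpoint maps `src`, `tgt`:
pairwise distinct vertices `v_0, …, v_n` and edges `x_0, …, x_n` with `x_i` going
from `v_i` to `v_{i+1}` (indices mod `n+1`). -/
structure DirCycle {V E : Type} (src tgt : E → V) where
  n : ℕ
  vtx : ZMod (n + 1) → V
  edge : ZMod (n + 1) → E
  vtx_inj : Function.Injective vtx
  edge_src : ∀ i, src (edge i) = vtx i
  edge_tgt : ∀ i, tgt (edge i) = vtx (i + 1)

/-- `C` is the set of edges of a directed cycle.  (A directed cycle, considered up to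
cyclic permutation, is uniquely determined by its set of edges.) -/
def IsCycle {V E : Type} (src tgt : E → V) (C : Set E) : Prop :=
  ∃ c : DirCycle src tgt, C = Set.range c.edge

/-- `α(G)`: the maximal number of pairwise edge-disjoint directed cycles. -/
noncomputable def cyclePacking {V E : Type} (src tgt : E → V) : ℕ :=
  sSup {k | ∃ f : Fin k → Set E, (∀ i, IsCycle src tgt (f i)) ∧
    ∀ i j, i ≠ j → Disjoint (f i) (f j)}



lemma esymm_gt_card_eq_zero (s : Multiset ℂ) {l : ℕ} (h : Multiset.card s < l) :
    s.esymm l = 0 := by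
  rw [Multiset.esymm, Multiset.powersetCard_eq_empty _ h]
  simp

lemma powersetCard_card_self {α : Type*} (s : Multiset α) :
    Multiset.powersetCard (Multiset.card s) s = {s} := by
  have hc : Multiset.card (Multiset.powersetCard (Multiset.card s) s) = 1 := by
    rw [Multiset.card_powersetCard, Nat.choose_self]
  obtain ⟨a, ha⟩ := Multiset.card_eq_one.mp hc
  have hm : s ∈ Multiset.powersetCard (Multiset.card s) s :=
    Multiset.mem_powersetCard.mpr ⟨le_rfl, rfl⟩
  rw [ha] at hm ⊢
  rw [Multiset.mem_singleton.mp hm]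

lemma esymm_card_eq_prod (s : Multiset ℂ) : s.esymm (Multiset.card s) = s.prod := by
  rw [Multiset.esymm, powersetCard_card_self]
  simp

lemma multiset_eq_of_esymm_eq {s t : Multiset ℂ} (hs : ∀ x ∈ s, x ≠ 0)
    (ht : ∀ x ∈ t, x ≠ 0) (h : ∀ l, 1 ≤ l → s.esymm l = t.esymm l) : s = t := by
  have hcard : Multiset.card s = Multiset.card t := by
    by_contra hne
    rcases Nat.lt_or_ge (Multiset.card s) (Multiset.card t) with hlt | hge
    · have := h (Multiset.card t) (by omega)
      rw [esymm_gt_card_eq_zero s hlt, esymm_card_eq_prod] at this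
      exact Multiset.prod_ne_zero (fun h0 => ht 0 h0 rfl) this.symm
    · have hlt : Multiset.card t < Multiset.card s := by omega
      have := h (Multiset.card s) (by omega)
      rw [esymm_gt_card_eq_zero t hlt, esymm_card_eq_prod] at this
      exact Multiset.prod_ne_zero (fun h0 => hs 0 h0 rfl) this
  have hmon : ∀ (u : Multiset ℂ) (f : Polynomial ℂ),
      f ∈ u.map (fun r => Polynomial.X + Polynomial.C r) → f.Monic := by
    intro u f hf
    simp only [Multiset.mem_map] at hf; obtain ⟨r, _, rfl⟩ := hf
    exact Polynomial.monic_X_add_C r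
  have hdeg : ∀ u : Multiset ℂ,
      ((u.map fun r => Polynomial.X + Polynomial.C r).prod).natDegree = Multiset.card u := by
    intro u
    rw [Polynomial.natDegree_multiset_prod_of_monic _ (hmon u)]
    simp [Multiset.map_map, Function.comp_def]
  have hP : (s.map fun r => Polynomial.X + Polynomial.C r).prod
      = (t.map fun r => Polynomial.X + Polynomial.C r).prod := by
    ext k
    rcases Nat.lt_trichotomy k (Multiset.card s) with hk | hk | hk
    · rw [Multiset.prod_X_add_C_coeff s (le_of_lt hk),
        Multiset.prod_X_add_C_coeff t (le_of_lt (hcard ▸ hk)), hcard]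
      exact h _ (by omega)
    · subst hk
      rw [Multiset.prod_X_add_C_coeff s le_rfl, Multiset.prod_X_add_C_coeff t (hcard ▸ le_rfl),
        hcard]
      simp [Multiset.esymm, Multiset.powersetCard_zero_left]
    · rw [Polynomial.coeff_eq_zero_of_natDegree_lt (by rw [hdeg]; omega),
        Polynomial.coeff_eq_zero_of_natDegree_lt (by rw [hdeg]; omega)]
  have hroots : ∀ u : Multiset ℂ,
      ((u.map fun r => Polynomial.X + Polynomial.C r).prod).roots = u.map Neg.neg := by
    intro u
    rw [Polynomial.roots_multiset_prod]
    · rw [Multiset.bind_map]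
      have h1 : ∀ r : ℂ, ((Polynomial.X + Polynomial.C r).roots) = ({-r} : Multiset ℂ) := by
        intro r
        have h2 : Polynomial.X + Polynomial.C r = Polynomial.X - Polynomial.C (-r) := by
          rw [map_neg, sub_neg_eq_add]
        rw [h2, Polynomial.roots_X_sub_C]
      calc (u.bind fun r => (Polynomial.X + Polynomial.C r).roots)
          = u.bind (fun r => ({-r} : Multiset ℂ)) :=
            Multiset.bind_congr (fun r _ => h1 r)
        _ = u.map Neg.neg := Multiset.bind_singleton _ _
    · intro h0
      simp only [Multiset.mem_map] at h0
      obtain ⟨r, _, hr⟩ := h0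
      exact (Polynomial.monic_X_add_C r).ne_zero hr
  have := (hroots s).symm.trans (hP ▸ hroots t)
  exact Multiset.map_injective neg_injective this


lemma esymm_cons_zero (t : Multiset ℂ) {l : ℕ} (hl : 1 ≤ l) :
    ((0 : ℂ) ::ₘ t).esymm l = t.esymm l := by
  obtain ⟨n, rfl⟩ : ∃ n, l = n + 1 := ⟨l - 1, by omega⟩
  rw [Multiset.esymm, Multiset.powersetCard_cons, Multiset.map_add, Multiset.sum_add,
    Multiset.map_map]
  simp [Function.comp_def, Multiset.esymm]

lemma esymm_add_replicate_zero (t : Multiset ℂ) (k : ℕ) {l : ℕ} (hl : 1 ≤ l) :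
    (t + Multiset.replicate k 0).esymm l = t.esymm l := by
  induction k with
  | zero => simp
  | succ k ih =>
    rw [Multiset.replicate_succ, Multiset.add_cons, esymm_cons_zero _ hl]
    exact ih

lemma esymm_filter_ne_zero (s : Multiset ℂ) {l : ℕ} (hl : 1 ≤ l) :
    (s.filter (· ≠ 0)).esymm l = s.esymm l := by
  conv_rhs => rw [← Multiset.filter_add_not (· ≠ 0) s]
  have h1 : s.filter (fun a => ¬ a ≠ 0) = Multiset.replicate (s.count 0) 0 := by
    rw [Multiset.filter_congr (fun a _ => by simp : ∀ a ∈ s, (¬ a ≠ 0) ↔ a = 0)]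
    exact Multiset.filter_eq' s 0
  rw [h1, esymm_add_replicate_zero _ _ hl]


set_option linter.unusedSectionVars false

section Graph

section Graph

variable {V E : Type} [Fintype V] [Fintype E] [DecidableEq V] [DecidableEq E]

lemma aeval_esymmOf (p : E → ℂ) (s : Finset E) (l : ℕ) :
    MvPolynomial.aeval p (esymmOf ℤ s l) = (s.val.map p).esymm l := by
  rw [esymmOf, Finset.esymm_map_val, map_sum]
  exact Finset.sum_congr rfl fun t _ => by rw [map_prod]; simp

def IsBalanced (src tgt : E → V) (p : E → ℂ) : Prop :=
  ∀ (v : V) (c : ℂ), c ≠ 0 →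
    (Finset.univ.filter fun e => src e = v ∧ p e = c).card =
    (Finset.univ.filter fun e => tgt e = v ∧ p e = c).card

lemma count_edgeM (f : E → V) (p : E → ℂ) (v : V) (c : ℂ) :
    Multiset.count c ((Finset.univ.filter fun e => f e = v).val.map p)
      = (Finset.univ.filter fun e => f e = v ∧ p e = c).card := by
  rw [Multiset.count_map, ← Finset.filter_val, Finset.filter_filter]
  have h : (Finset.univ.filter fun e => f e = v ∧ c = p e)
      = (Finset.univ.filter fun e => f e = v ∧ p e = c) := by
    ext e; simp [eq_comm]
  rw [h, Finset.card_def]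

lemma balanced_iff_multiset (src tgt : E → V) (p : E → ℂ) :
    IsBalanced src tgt p ↔ ∀ v : V,
      ((Finset.univ.filter fun e => src e = v).val.map p).filter (· ≠ 0)
        = ((Finset.univ.filter fun e => tgt e = v).val.map p).filter (· ≠ 0) := by
  constructor
  · intro hb v
    ext c
    rw [Multiset.count_filter, Multiset.count_filter]
    split_ifs with hc
    · rw [count_edgeM, count_edgeM, hb v c hc]
    · rfl
  · intro h v c hc
    have := congrArg (Multiset.count c) (h v)
    rw [Multiset.count_filter, Multiset.count_filter, if_pos hc, if_pos hc,
      count_edgeM, count_edgeM] at this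
    exact this

lemma mem_zeroLocus_iff_balanced (src tgt : E → V) (p : E → ℂ) :
    p ∈ zeroLocus (incidenceIdeal ℤ src tgt) ↔ IsBalanced src tgt p := by
  constructor
  · intro hp
    rw [balanced_iff_multiset]
    intro v
    apply multiset_eq_of_esymm_eq
      (fun x hx => (Multiset.mem_filter.mp hx).2)
      (fun x hx => (Multiset.mem_filter.mp hx).2)
    intro l hl
    rw [esymm_filter_ne_zero _ hl, esymm_filter_ne_zero _ hl]
    have hgen : (esymmOf ℤ (Finset.univ.filter fun x => src x = v) l
        - esymmOf ℤ (Finset.univ.filter fun x => tgt x = v) l)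
        ∈ incidenceIdeal ℤ src tgt :=
      Ideal.subset_span ⟨v, l, hl, rfl⟩
    have := hp _ hgen
    rwa [map_sub, aeval_esymmOf, aeval_esymmOf, sub_eq_zero] at this
  · intro hb f hf
    have hle : incidenceIdeal ℤ src tgt
        ≤ RingHom.ker (MvPolynomial.aeval (R := ℤ) p).toRingHom := by
      rw [incidenceIdeal, Ideal.span_le]
      rintro g ⟨v, l, hl, rfl⟩
      rw [SetLike.mem_coe, RingHom.mem_ker]
      show MvPolynomial.aeval p _ = 0
      rw [map_sub, aeval_esymmOf, aeval_esymmOf, sub_eq_zero,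
        ← esymm_filter_ne_zero _ hl, ← esymm_filter_ne_zero
          ((Finset.univ.filter fun e => tgt e = v).val.map p) hl]
      exact congrArg (fun m => Multiset.esymm m l) ((balanced_iff_multiset src tgt p).mp hb v)
    exact hle hf

variable {src tgt : E → V}

lemma cycle_edge_inj (c : DirCycle src tgt) : Function.Injective c.edge := by
  intro i j h
  apply c.vtx_inj
  rw [← c.edge_src i, ← c.edge_src j, h]

/-- the set of edges of a cycle, as a Finset -/
def cycF (c : DirCycle src tgt) : Finset E := Finset.univ.image c.edge

lemma mem_cycF {c : DirCycle src tgt} {e : E} : e ∈ cycF c ↔ e ∈ Set.range c.edge := by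
  simp [cycF, Set.mem_range]

lemma filter_src_cycle (c : DirCycle src tgt) (v : V) :
    (Finset.univ.filter fun e => src e = v ∧ e ∈ cycF c)
      = (Finset.univ.filter fun i => c.vtx i = v).image c.edge := by
  ext e
  simp only [Finset.mem_filter, Finset.mem_image, Finset.mem_univ, true_and, mem_cycF,
    Set.mem_range]
  constructor
  · rintro ⟨hv, i, rfl⟩
    exact ⟨i, by rw [← c.edge_src i, hv], rfl⟩
  · rintro ⟨i, hi, rfl⟩
    exact ⟨by rw [c.edge_src i, hi], i, rfl⟩

lemma filter_tgt_cycle (c : DirCycle src tgt) (v : V) :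
    (Finset.univ.filter fun e => tgt e = v ∧ e ∈ cycF c)
      = (Finset.univ.filter fun i => c.vtx i = v).image (fun i => c.edge (i - 1)) := by
  ext e
  simp only [Finset.mem_filter, Finset.mem_image, Finset.mem_univ, true_and, mem_cycF,
    Set.mem_range]
  constructor
  · rintro ⟨hv, i, rfl⟩
    refine ⟨i + 1, by rw [← c.edge_tgt i, hv], by rw [add_sub_cancel_right]⟩
  · rintro ⟨i, hi, rfl⟩
    refine ⟨by rw [c.edge_tgt (i - 1), sub_add_cancel, hi], i - 1, rfl⟩

lemma card_filter_cycle (c : DirCycle src tgt) (v : V) :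
    (Finset.univ.filter fun e => src e = v ∧ e ∈ cycF c).card
      = (Finset.univ.filter fun e => tgt e = v ∧ e ∈ cycF c).card := by
  rw [filter_src_cycle, filter_tgt_cycle,
    Finset.card_image_of_injective _ (cycle_edge_inj c),
    Finset.card_image_of_injective _ (fun i j h => by
      have := cycle_edge_inj c h
      exact sub_left_injective this)]




lemma isBalanced_zero : IsBalanced src tgt (0 : E → ℂ) := by
  intro v c hc
  rw [Finset.filter_congr (fun e _ => by simp [Ne.symm hc] :
      ∀ e ∈ Finset.univ, ((src e = v ∧ (0 : E → ℂ) e = c) ↔ False)),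
    Finset.filter_congr (fun e _ => by simp [Ne.symm hc] :
      ∀ e ∈ Finset.univ, ((tgt e = v ∧ (0 : E → ℂ) e = c) ↔ False))]

/-- indicator functions of cycles are balanced -/
lemma isBalanced_indicator (c : DirCycle src tgt) (a : ℂ) :
    IsBalanced src tgt (Set.indicator (Set.range c.edge) (fun _ => a)) := by
  intro v d hd
  by_cases had : a = d
  · subst had
    have hval : ∀ e : E, (Set.indicator (Set.range c.edge) (fun _ => a) e = a)
        ↔ e ∈ cycF c := by
      intro e
      by_cases he : e ∈ Set.range c.edge
      · simp [Set.indicator_of_mem he, mem_cycF, he]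
      · simp [Set.indicator_of_notMem he, mem_cycF, he, Ne.symm hd]
    rw [Finset.filter_congr (fun e _ => by rw [hval e] :
        ∀ e ∈ Finset.univ, ((src e = v ∧ Set.indicator (Set.range c.edge) (fun _ => a) e = a)
          ↔ (src e = v ∧ e ∈ cycF c))),
      Finset.filter_congr (fun e _ => by rw [hval e] :
        ∀ e ∈ Finset.univ, ((tgt e = v ∧ Set.indicator (Set.range c.edge) (fun _ => a) e = a)
          ↔ (tgt e = v ∧ e ∈ cycF c)))]
    exact card_filter_cycle c v
  · have hval : ∀ e : E, (Set.indicator (Set.range c.edge) (fun _ => a) e = d) ↔ False := by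
      intro e
      by_cases he : e ∈ Set.range c.edge
      · simp [Set.indicator_of_mem he, had]
      · simp [Set.indicator_of_notMem he, Ne.symm hd]
    rw [Finset.filter_congr (fun e _ => by rw [hval e, and_false] :
        ∀ e ∈ Finset.univ, ((src e = v ∧ Set.indicator (Set.range c.edge) (fun _ => a) e = d)
          ↔ False)),
      Finset.filter_congr (fun e _ => by rw [hval e, and_false] :
        ∀ e ∈ Finset.univ, ((tgt e = v ∧ Set.indicator (Set.range c.edge) (fun _ => a) e = d)
          ↔ False))]

/-- sums with pointwise-disjoint supports of balanced functions are balanced -/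
lemma isBalanced_add {p q : E → ℂ} (hp : IsBalanced src tgt p) (hq : IsBalanced src tgt q)
    (hd : ∀ e, p e = 0 ∨ q e = 0) : IsBalanced src tgt (p + q) := by
  intro v d hdne
  have key : ∀ f : E → V,
      (Finset.univ.filter fun e => f e = v ∧ (p + q) e = d).card
        = (Finset.univ.filter fun e => f e = v ∧ p e = d).card
          + (Finset.univ.filter fun e => f e = v ∧ q e = d).card := by
    intro f
    have hsplit : (Finset.univ.filter fun e => f e = v ∧ (p + q) e = d)
        = (Finset.univ.filter fun e => f e = v ∧ p e = d)
          ∪ (Finset.univ.filter fun e => f e = v ∧ q e = d) := by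
      ext e
      simp only [Finset.mem_filter, Finset.mem_univ, true_and, Finset.mem_union, Pi.add_apply]
      rcases hd e with h0 | h0
      · rw [h0, zero_add]
        constructor
        · exact fun h => Or.inr h
        · rintro (⟨hv, hval⟩ | h)
          · exact absurd hval.symm hdne
          · exact h
      · rw [h0, add_zero]
        constructor
        · exact fun h => Or.inl h
        · rintro (h | ⟨hv, hval⟩)
          · exact h
          · exact absurd hval.symm hdne
    rw [hsplit, Finset.card_union_of_disjoint]
    rw [Finset.disjoint_left]
    rintro e he1 he2
    simp only [Finset.mem_filter, Finset.mem_univ, true_and] at he1 he2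
    rcases hd e with h0 | h0
    · rw [h0] at he1; exact hdne he1.2.symm
    · rw [h0] at he2; exact hdne he2.2.symm
  rw [key src, key tgt, hp v d hdne, hq v d hdne]

lemma isBalanced_sub_indicator {p : E → ℂ} (hp : IsBalanced src tgt p)
    (c : DirCycle src tgt) {a : ℂ} (ha : ∀ i, p (c.edge i) = a) :
    IsBalanced src tgt (p - Set.indicator (Set.range c.edge) fun _ => a) := by
  intro v d hd
  have hq : ∀ e, ((p - Set.indicator (Set.range c.edge) fun _ => a) e = d)
      ↔ (p e = d ∧ ¬ e ∈ cycF c) := by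
    intro e
    by_cases he : e ∈ Set.range c.edge
    · have hcy : e ∈ cycF c := mem_cycF.mpr he
      obtain ⟨i, rfl⟩ := he
      have hpe : p (c.edge i) = a := ha i
      simp only [Pi.sub_apply, Set.indicator_of_mem (Set.mem_range_self i), hpe, sub_self,
        hcy, not_true, and_false, iff_false]
      exact Ne.symm hd
    · simp [Set.indicator_of_notMem he, mem_cycF, he]
  have key : ∀ f : E → V,
      (Finset.univ.filter fun e =>
          f e = v ∧ (p - Set.indicator (Set.range c.edge) fun _ => a) e = d).card
        + (Finset.univ.filter fun e => (f e = v ∧ p e = d) ∧ e ∈ cycF c).card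
        = (Finset.univ.filter fun e => f e = v ∧ p e = d).card := by
    intro f
    have h1 := Finset.card_filter_add_card_filter_not
      (s := Finset.univ.filter fun e => f e = v ∧ p e = d) (p := fun e => e ∈ cycF c)
    rw [Finset.filter_filter, Finset.filter_filter] at h1
    rw [← h1]
    have h2 : (Finset.univ.filter fun e =>
          f e = v ∧ (p - Set.indicator (Set.range c.edge) fun _ => a) e = d)
        = (Finset.univ.filter fun e => (f e = v ∧ p e = d) ∧ ¬ e ∈ cycF c) := by
      apply Finset.filter_congr
      intro e _
      rw [hq e, and_assoc]
    rw [h2]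
    omega
  have h3 : (Finset.univ.filter fun e => (src e = v ∧ p e = d) ∧ e ∈ cycF c).card
      = (Finset.univ.filter fun e => (tgt e = v ∧ p e = d) ∧ e ∈ cycF c).card := by
    by_cases hda : d = a
    · subst hda
      have hcg : ∀ f : E → V, (Finset.univ.filter fun e => (f e = v ∧ p e = d) ∧ e ∈ cycF c)
          = (Finset.univ.filter fun e => f e = v ∧ e ∈ cycF c) := by
        intro f
        apply Finset.filter_congr
        intro e _
        constructor
        · rintro ⟨⟨h1, h2⟩, h3⟩; exact ⟨h1, h3⟩
        · rintro ⟨h1, h3⟩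
          obtain ⟨i, rfl⟩ := mem_cycF.mp h3
          exact ⟨⟨h1, ha i⟩, h3⟩
      rw [hcg src, hcg tgt]
      exact card_filter_cycle c v
    · have hcg : ∀ f : E → V, (Finset.univ.filter fun e => (f e = v ∧ p e = d) ∧ e ∈ cycF c)
          = (∅ : Finset E) := by
        intro f
        rw [Finset.filter_eq_empty_iff]
        rintro e _ ⟨⟨h1, h2⟩, h3⟩
        obtain ⟨i, rfl⟩ := mem_cycF.mp h3
        exact hda (h2.symm.trans (ha i))
      rw [hcg src, hcg tgt]
  have hb := hp v d hd
  have k1 := key src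
  have k2 := key tgt
  omega

lemma exists_succ {S : Finset E}
    (hS : ∀ v, (S.filter fun e => src e = v).card = (S.filter fun e => tgt e = v).card)
    {e : E} (he : e ∈ S) : ∃ e' ∈ S, src e' = tgt e := by
  have h1 : 0 < (S.filter fun e' => tgt e' = tgt e).card :=
    Finset.card_pos.mpr ⟨e, Finset.mem_filter.mpr ⟨he, rfl⟩⟩
  rw [← hS (tgt e)] at h1
  obtain ⟨e', he'⟩ := Finset.card_pos.mp h1
  exact ⟨e', (Finset.mem_filter.mp he').1, (Finset.mem_filter.mp he').2⟩

lemma exists_cycle_in {S : Finset E}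
    (hS : ∀ v, (S.filter fun e => src e = v).card = (S.filter fun e => tgt e = v).card)
    (hne : S.Nonempty) : ∃ c : DirCycle src tgt, ∀ i, c.edge i ∈ S := by
  classical
  obtain ⟨e0, he0⟩ := hne
  have step : ∀ e : {e // e ∈ S}, ∃ e' : {e // e ∈ S}, src e'.1 = tgt e.1 := by
    rintro ⟨e, he⟩
    obtain ⟨e', h1, h2⟩ := exists_succ hS he
    exact ⟨⟨e', h1⟩, h2⟩
  let g : ℕ → {e // e ∈ S} := fun k =>
    Nat.rec ⟨e0, he0⟩ (fun _ prev => (step prev).choose) k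
  have hg : ∀ k, src (g (k + 1)).1 = tgt (g k).1 := fun k => (step (g k)).choose_spec
  set w : ℕ → V := fun k => src (g k).1 with hwdef
  have hrep : ∃ l, ∃ k, k < l ∧ w k = w l := by
    obtain ⟨k, l, hkl, heq⟩ := Finite.exists_ne_map_eq_of_infinite w
    rcases Nat.lt_or_ge k l with h | h
    · exact ⟨l, k, h, heq⟩
    · exact ⟨k, l, by omega, heq.symm⟩
  set l0 := Nat.find hrep with hl0
  obtain ⟨k0, hk0lt, hk0eq⟩ := Nat.find_spec hrep
  have hmin : ∀ m, m < l0 → ¬ ∃ k, k < m ∧ w k = w m := fun m hm => Nat.find_min hrep hm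
  have hinj : ∀ a b, k0 + a < l0 → k0 + b < l0 → w (k0 + a) = w (k0 + b) → a = b := by
    intro a b ha hb heq
    by_contra hne'
    rcases Nat.lt_or_ge a b with h | h
    · exact hmin (k0 + b) hb ⟨k0 + a, by omega, heq⟩
    · exact hmin (k0 + a) ha ⟨k0 + b, by omega, heq.symm⟩
  set n := l0 - k0 - 1 with hn
  have hn1 : n + 1 = l0 - k0 := by omega
  have hvlt : ∀ i : ZMod (n + 1), i.val < n + 1 := fun i => ZMod.val_lt i
  have hvadd : ∀ i : ZMod (n + 1), (i + 1).val = (i.val + 1) % (n + 1) := by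
    intro i
    calc (i + 1).val = (i.val + 1 % (n + 1)) % (n + 1) := by
          rw [ZMod.val_add, ZMod.val_one_eq_one_mod]
      _ = (i.val % (n + 1) + 1 % (n + 1)) % (n + 1) := by
          rw [Nat.mod_eq_of_lt (hvlt i)]
      _ = (i.val + 1) % (n + 1) := (Nat.add_mod _ _ _).symm
  refine ⟨⟨n, fun i => w (k0 + i.val), fun i => (g (k0 + i.val)).1, ?_, fun i => rfl, ?_⟩,
    fun i => (g (k0 + i.val)).2⟩
  · intro i j hij
    have h1 : k0 + i.val < l0 := by have := hvlt i; omega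
    have h2 : k0 + j.val < l0 := by have := hvlt j; omega
    have := hinj i.val j.val h1 h2 hij
    exact ZMod.val_injective _ this
  · intro i
    have htg : tgt (g (k0 + i.val)).1 = w (k0 + i.val + 1) := (hg (k0 + i.val)).symm
    rw [htg]
    show w (k0 + i.val + 1) = w (k0 + (i + 1).val)
    rw [hvadd i]
    rcases Nat.lt_or_ge (i.val + 1) (n + 1) with h | h
    · rw [Nat.mod_eq_of_lt h, Nat.add_assoc]
    · have hieq : i.val = n := by have := hvlt i; omega
      have hmod : (i.val + 1) % (n + 1) = 0 := by rw [hieq]; simp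
      rw [hmod]
      have : k0 + i.val + 1 = l0 := by omega
      rw [this, Nat.add_zero, ← hk0eq]

lemma cycle_subset_closed (c : DirCycle src tgt) {T : Finset E}
    (hsub : ∀ e ∈ T, e ∈ Set.range c.edge)
    (hbal : ∀ v, (T.filter fun e => src e = v).card = (T.filter fun e => tgt e = v).card)
    (hne : T.Nonempty) : ∀ e ∈ Set.range c.edge, e ∈ T := by
  have closure : ∀ i, c.edge i ∈ T → c.edge (i + 1) ∈ T := by
    intro i hi
    have h1 : 0 < (T.filter fun e => tgt e = c.vtx (i + 1)).card :=
      Finset.card_pos.mpr ⟨c.edge i, Finset.mem_filter.mpr ⟨hi, c.edge_tgt i⟩⟩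
    rw [← hbal _] at h1
    obtain ⟨e', he'⟩ := Finset.card_pos.mp h1
    obtain ⟨he'T, he'src⟩ := Finset.mem_filter.mp he'
    obtain ⟨j, rfl⟩ := hsub e' he'T
    have hj : j = i + 1 := c.vtx_inj (by rw [← c.edge_src j, he'src])
    rwa [← hj]
  obtain ⟨e1, he1⟩ := hne
  obtain ⟨i0, rfl⟩ := hsub e1 he1
  have hstep : ∀ m : ℕ, c.edge (i0 + (m : ZMod (c.n + 1))) ∈ T := by
    intro m
    induction m with
    | zero => simpa using he1
    | succ m ih =>
      have h2 := closure _ ih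
      rwa [Nat.cast_add, Nat.cast_one, ← add_assoc]
  rintro e ⟨j, rfl⟩
  have h3 := hstep (j - i0).val
  rwa [ZMod.natCast_rightInverse (j - i0), show i0 + (j - i0) = j from by ring] at h3

lemma smul_indicator_one (C : Set E) (a : ℂ) :
    a • Set.indicator C (fun _ => (1 : ℂ)) = Set.indicator C fun _ => a := by
  funext e
  by_cases he : e ∈ C
  · simp [Set.indicator_of_mem he]
  · simp [Set.indicator_of_notMem he]

def cycleGens (src tgt : E → V) : Set (E → ℂ) :=
  {q | ∃ C : Set E, IsCycle src tgt C ∧ q = Set.indicator C fun _ => (1 : ℂ)}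

lemma mem_span_of_isBalanced {p : E → ℂ} (hp : IsBalanced src tgt p) :
    p ∈ Submodule.span ℂ (cycleGens src tgt) := by
  suffices h : ∀ (N : ℕ) (p : E → ℂ), (Finset.univ.filter fun e => p e ≠ 0).card ≤ N →
      IsBalanced src tgt p → p ∈ Submodule.span ℂ (cycleGens src tgt) from
    h _ p le_rfl hp
  intro N
  induction N with
  | zero =>
    intro p hcard hbal
    have hz : p = 0 := by
      funext e
      by_contra h
      have : e ∈ Finset.univ.filter fun e => p e ≠ 0 := Finset.mem_filter.mpr ⟨Finset.mem_univ e, h⟩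
      have := Finset.card_pos.mpr ⟨e, this⟩
      omega
    rw [hz]
    exact Submodule.zero_mem _
  | succ N ih =>
    intro p hcard hbal
    by_cases hzero : ∀ e, p e = 0
    · have hz : p = 0 := funext hzero
      rw [hz]; exact Submodule.zero_mem _
    · push_neg at hzero
      obtain ⟨e0, he0⟩ := hzero
      set a := p e0 with hadef
      have hSbal : ∀ v, ((Finset.univ.filter fun e => p e = a).filter fun e => src e = v).card
          = ((Finset.univ.filter fun e => p e = a).filter fun e => tgt e = v).card := by
        intro v
        rw [Finset.filter_filter, Finset.filter_filter]
        have hcomm : ∀ f : E → V, (Finset.univ.filter fun e => p e = a ∧ f e = v)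
            = (Finset.univ.filter fun e => f e = v ∧ p e = a) := by
          intro f
          apply Finset.filter_congr
          intro e _
          exact and_comm
        rw [hcomm src, hcomm tgt]
        exact hbal v a he0
      obtain ⟨c, hc⟩ := exists_cycle_in hSbal
        ⟨e0, Finset.mem_filter.mpr ⟨Finset.mem_univ e0, rfl⟩⟩
      have hca : ∀ i, p (c.edge i) = a := fun i => (Finset.mem_filter.mp (hc i)).2
      set q := p - Set.indicator (Set.range c.edge) fun _ => a with hqdef
      have hqbal := isBalanced_sub_indicator hbal c hca
      have hqsupp : (Finset.univ.filter fun e => q e ≠ 0).card ≤ N := by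
        have hmem0 : c.edge 0 ∈ Finset.univ.filter fun e => p e ≠ 0 :=
          Finset.mem_filter.mpr ⟨Finset.mem_univ _, by rw [hca 0]; exact he0⟩
        have hsub : (Finset.univ.filter fun e => q e ≠ 0)
            ⊆ (Finset.univ.filter fun e => p e ≠ 0).erase (c.edge 0) := by
          intro e he
          have hqe : q e ≠ 0 := (Finset.mem_filter.mp he).2
          apply Finset.mem_erase.mpr
          constructor
          · rintro rfl
            apply hqe
            rw [hqdef]
            simp [Set.indicator_of_mem (Set.mem_range_self 0), hca 0]
          · apply Finset.mem_filter.mpr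
            refine ⟨Finset.mem_univ e, fun hpe => hqe ?_⟩
            have henr : e ∉ Set.range c.edge := by
              rintro ⟨i, rfl⟩
              rw [hca i] at hpe
              exact he0 hpe
            rw [hqdef]
            simp [Set.indicator_of_notMem henr, hpe]
        have h1 := Finset.card_le_card hsub
        have h2 := Finset.card_erase_of_mem hmem0
        have h3 := Finset.card_pos.mpr ⟨c.edge 0, hmem0⟩
        omega
      have hq := ih q hqsupp hqbal
      have hpq : p = q + a • Set.indicator (Set.range c.edge) fun _ => (1 : ℂ) := by
        rw [smul_indicator_one, hqdef, sub_add_cancel]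
      rw [hpq]
      exact Submodule.add_mem _ hq (Submodule.smul_mem _ _
        (Submodule.subset_span ⟨Set.range c.edge, ⟨c, rfl⟩, rfl⟩))

lemma isBalanced_sum {ι : Type} (s : Finset ι) (Cf : ι → DirCycle src tgt) (co : ι → ℂ)
    (hdisj : ∀ i ∈ s, ∀ j ∈ s, i ≠ j →
      Disjoint (Set.range (Cf i).edge) (Set.range (Cf j).edge)) :
    IsBalanced src tgt (∑ i ∈ s, Set.indicator (Set.range (Cf i).edge) fun _ => co i) := by
  classical
  induction s using Finset.induction_on with
  | empty => simpa using (isBalanced_zero (src := src) (tgt := tgt))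
  | @insert a s ha ih =>
    rw [Finset.sum_insert ha]
    refine isBalanced_add (isBalanced_indicator _ _)
      (ih fun i hi j hj hij => hdisj i (Finset.mem_insert_of_mem hi)
        j (Finset.mem_insert_of_mem hj) hij) ?_
    intro e
    by_cases he : e ∈ Set.range (Cf a).edge
    · right
      rw [Finset.sum_apply]
      apply Finset.sum_eq_zero
      intro j hj
      have hne : a ≠ j := fun h => ha (h ▸ hj)
      have hd := hdisj a (Finset.mem_insert_self a s) j (Finset.mem_insert_of_mem hj) hne
      have : e ∉ Set.range (Cf j).edge := fun h => (Set.disjoint_left.mp hd he) h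
      exact Set.indicator_of_notMem this _
    · left
      exact Set.indicator_of_notMem he _

lemma not_isBalanced_two (c c' : DirCycle src tgt)
    (hne : Set.range c.edge ≠ Set.range c'.edge) {e0 : E}
    (h0 : e0 ∈ Set.range c.edge) (h0' : e0 ∈ Set.range c'.edge) :
    ¬ IsBalanced src tgt
      (Set.indicator (Set.range c.edge) (fun _ => (1 : ℂ))
        + Set.indicator (Set.range c'.edge) fun _ => (1 : ℂ)) := by
  intro hb
  set p := Set.indicator (Set.range c.edge) (fun _ => (1 : ℂ))
    + Set.indicator (Set.range c'.edge) fun _ => (1 : ℂ) with hpdef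
  have hval : ∀ e, p e = 2 ↔ (e ∈ Set.range c.edge ∧ e ∈ Set.range c'.edge) := by
    intro e
    rw [hpdef]
    by_cases h1 : e ∈ Set.range c.edge <;> by_cases h2 : e ∈ Set.range c'.edge <;>
      simp [Set.indicator_of_mem, Set.indicator_of_notMem, h1, h2] <;> norm_num
  have hTsub : ∀ e ∈ (Finset.univ.filter fun e => p e = 2), e ∈ Set.range c.edge :=
    fun e he => ((hval e).mp (Finset.mem_filter.mp he).2).1
  have hTsub' : ∀ e ∈ (Finset.univ.filter fun e => p e = 2), e ∈ Set.range c'.edge :=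
    fun e he => ((hval e).mp (Finset.mem_filter.mp he).2).2
  have hTbal : ∀ v, ((Finset.univ.filter fun e => p e = 2).filter fun e => src e = v).card
      = ((Finset.univ.filter fun e => p e = 2).filter fun e => tgt e = v).card := by
    intro v
    rw [Finset.filter_filter, Finset.filter_filter]
    have hcomm : ∀ f : E → V, (Finset.univ.filter fun e => p e = 2 ∧ f e = v)
        = (Finset.univ.filter fun e => f e = v ∧ p e = 2) := by
      intro f
      apply Finset.filter_congr
      intro e _
      exact and_comm
    rw [hcomm src, hcomm tgt]
    exact hb v 2 two_ne_zero
  have hTne : (Finset.univ.filter fun e => p e = 2).Nonempty :=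
    ⟨e0, Finset.mem_filter.mpr ⟨Finset.mem_univ _, (hval e0).mpr ⟨h0, h0'⟩⟩⟩
  have hc1 := cycle_subset_closed c hTsub hTbal hTne
  have hc2 := cycle_subset_closed c' hTsub' hTbal hTne
  apply hne
  ext e
  constructor
  · intro he
    exact hTsub' _ (hc1 e he)
  · intro he
    exact hTsub _ (hc2 e he)

lemma isCycle_nonempty {C : Set E} (hC : IsCycle src tgt C) : C.Nonempty := by
  obtain ⟨c, rfl⟩ := hC; exact ⟨c.edge 0, Set.mem_range_self 0⟩

/-- all distinct directed cycles are pairwise edge-disjoint -/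
def PD (src tgt : E → V) : Prop :=
  ∀ ⦃C C' : Set E⦄, IsCycle src tgt C → IsCycle src tgt C' → C ≠ C' → Disjoint C C'

lemma pack_le {k : ℕ} (hk : k ∈ {k | ∃ f : Fin k → Set E, (∀ i, IsCycle src tgt (f i)) ∧
      ∀ i j, i ≠ j → Disjoint (f i) (f j)}) : k ≤ {C : Set E | IsCycle src tgt C}.ncard := by
  obtain ⟨f, hcyc, hdisj⟩ := hk
  have hinj : Function.Injective
      (fun i : Fin k => (⟨f i, hcyc i⟩ : ↥{C : Set E | IsCycle src tgt C})) := by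
    intro i j hij
    by_contra hne
    have hd := hdisj i j hne
    have hfe : f i = f j := congrArg Subtype.val hij
    rw [hfe] at hd
    rcases isCycle_nonempty (hcyc j) with ⟨e, he⟩
    exact Set.disjoint_left.mp hd he he
  calc k = Nat.card (Fin k) := by simp
    _ ≤ Nat.card ↥{C : Set E | IsCycle src tgt C} := Nat.card_le_card_of_injective _ hinj
    _ = {C : Set E | IsCycle src tgt C}.ncard := Nat.card_coe_set_eq _

lemma zero_mem_pack : 0 ∈ {k | ∃ f : Fin k → Set E, (∀ i, IsCycle src tgt (f i)) ∧
    ∀ i j, i ≠ j → Disjoint (f i) (f j)} :=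
  ⟨fun i => i.elim0, fun i => i.elim0, fun i => i.elim0⟩

lemma pack_eq_of_pd (h : PD src tgt) :
    {C : Set E | IsCycle src tgt C}.ncard = cyclePacking src tgt := by
  classical
  haveI : Fintype ↥{C : Set E | IsCycle src tgt C} := Fintype.ofFinite _
  apply le_antisymm
  · apply le_csSup ⟨{C : Set E | IsCycle src tgt C}.ncard, fun k hk => pack_le hk⟩
    have eqv : ↥{C : Set E | IsCycle src tgt C} ≃ Fin ({C : Set E | IsCycle src tgt C}.ncard) :=
      Finite.equivFinOfCardEq (Nat.card_coe_set_eq _)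
    refine ⟨fun i => (eqv.symm i).1, fun i => (eqv.symm i).2, ?_⟩
    intro i j hij
    have hne : ((eqv.symm i) : Set E) ≠ ((eqv.symm j) : Set E) := by
      intro hh
      exact hij (eqv.symm.injective (Subtype.coe_injective hh))
    exact h (eqv.symm i).2 (eqv.symm j).2 hne
  · exact csSup_le ⟨0, zero_mem_pack⟩ fun k hk => pack_le hk

lemma pd_of_pack_eq (h : {C : Set E | IsCycle src tgt C}.ncard = cyclePacking src tgt) :
    PD src tgt := by
  classical
  haveI : Fintype ↥{C : Set E | IsCycle src tgt C} := Fintype.ofFinite _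
  have hmem : cyclePacking src tgt ∈ {k | ∃ f : Fin k → Set E, (∀ i, IsCycle src tgt (f i)) ∧
      ∀ i j, i ≠ j → Disjoint (f i) (f j)} :=
    Nat.sSup_mem ⟨0, zero_mem_pack⟩
      ⟨{C : Set E | IsCycle src tgt C}.ncard, fun k hk => pack_le hk⟩
  rw [← h] at hmem
  obtain ⟨f, hcyc, hdisj⟩ := hmem
  have hinj : Function.Injective
      (fun i => (⟨f i, hcyc i⟩ : ↥{C : Set E | IsCycle src tgt C})) := by
    intro i j hij
    by_contra hne
    have hd := hdisj i j hne
    have hfe : f i = f j := congrArg Subtype.val hij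
    rw [hfe] at hd
    rcases isCycle_nonempty (hcyc j) with ⟨e, he⟩
    exact Set.disjoint_left.mp hd he he
  have hsurj : Function.Surjective
      (fun i => (⟨f i, hcyc i⟩ : ↥{C : Set E | IsCycle src tgt C})) := by
    have hcards : Fintype.card (Fin ({C : Set E | IsCycle src tgt C}.ncard))
        = Fintype.card ↥{C : Set E | IsCycle src tgt C} := by
      rw [Fintype.card_fin, ← Nat.card_coe_set_eq, Nat.card_eq_fintype_card]
    exact ((Fintype.bijective_iff_injective_and_card _).mpr ⟨hinj, hcards⟩).2
  intro C C' hC hC' hne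
  obtain ⟨i, hi⟩ := hsurj ⟨C, hC⟩
  obtain ⟨j, hj⟩ := hsurj ⟨C', hC'⟩
  have hij : i ≠ j := by
    rintro rfl
    rw [hi] at hj
    exact hne (congrArg Subtype.val hj)
  have hd := hdisj i j hij
  rwa [show f i = C from congrArg Subtype.val hi,
    show f j = C' from congrArg Subtype.val hj] at hd

lemma exists_L_iff_pd (src tgt : E → V) :
    (∃ L : Submodule ℂ (E → ℂ), zeroLocus (incidenceIdeal ℤ src tgt) = (L : Set (E → ℂ)))
      ↔ PD src tgt := by
  constructor
  · rintro ⟨L, hL⟩ C C' hC hC' hne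
    by_contra hnd
    obtain ⟨e0, h0, h0'⟩ := Set.not_disjoint_iff.mp hnd
    obtain ⟨c, rfl⟩ := hC
    obtain ⟨c', rfl⟩ := hC'
    have h1 : Set.indicator (Set.range c.edge) (fun _ => (1 : ℂ))
        ∈ zeroLocus (incidenceIdeal ℤ src tgt) :=
      (mem_zeroLocus_iff_balanced _ _ _).mpr (isBalanced_indicator c 1)
    have h2 : Set.indicator (Set.range c'.edge) (fun _ => (1 : ℂ))
        ∈ zeroLocus (incidenceIdeal ℤ src tgt) :=
      (mem_zeroLocus_iff_balanced _ _ _).mpr (isBalanced_indicator c' 1)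
    rw [hL] at h1 h2
    have h3 : (Set.indicator (Set.range c.edge) (fun _ => (1 : ℂ))
        + Set.indicator (Set.range c'.edge) fun _ => (1 : ℂ)) ∈ (L : Set (E → ℂ)) :=
      L.add_mem h1 h2
    rw [← hL] at h3
    exact not_isBalanced_two c c' hne h0 h0'
      ((mem_zeroLocus_iff_balanced _ _ _).mp h3)
  · intro hpd
    refine ⟨Submodule.span ℂ (cycleGens src tgt), ?_⟩
    ext p
    rw [SetLike.mem_coe]
    show p ∈ zeroLocus (incidenceIdeal ℤ src tgt) ↔ _
    rw [mem_zeroLocus_iff_balanced]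
    constructor
    · exact mem_span_of_isBalanced
    · intro hp
      classical
      haveI : Fintype ↥{C : Set E | IsCycle src tgt C} := Fintype.ofFinite _
      have hgens : cycleGens src tgt = Set.range (fun C : ↥{C : Set E | IsCycle src tgt C} =>
          Set.indicator (C : Set E) fun _ => (1 : ℂ)) := by
        ext q
        constructor
        · rintro ⟨C, hC, rfl⟩
          exact ⟨⟨C, hC⟩, rfl⟩
        · rintro ⟨C, rfl⟩
          exact ⟨(C : Set E), C.2, rfl⟩
      rw [hgens] at hp
      obtain ⟨co, hco⟩ := (Submodule.mem_span_range_iff_exists_fun ℂ).mp hp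
      set Cf : ↥{C : Set E | IsCycle src tgt C} → DirCycle src tgt := fun C => C.2.choose
        with hCfdef
      have hCf : ∀ C : ↥{C : Set E | IsCycle src tgt C},
          (C : Set E) = Set.range (Cf C).edge := fun C => C.2.choose_spec
      have hsum : p = ∑ C : ↥{C : Set E | IsCycle src tgt C},
          Set.indicator (Set.range (Cf C).edge) fun _ => co C := by
        rw [← hco]
        apply Finset.sum_congr rfl
        intro C _
        rw [smul_indicator_one, hCf C]
      rw [hsum]
      apply isBalanced_sum
      intro i _ j _ hij
      rw [← hCf i, ← hCf j]
      exact hpd i.2 j.2 fun hh => hij (Subtype.ext hh)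

end Graph

theorem stmt3 {V E : Type} [Fintype V] [Fintype E] [DecidableEq V] [DecidableEq E]
    (src tgt : E → V) :
    (∃ L : Submodule ℂ (E → ℂ), zeroLocus (incidenceIdeal ℤ src tgt) = (L : Set (E → ℂ)))
      ↔ {C : Set E | IsCycle src tgt C}.ncard = cyclePacking src tgt :=
  (exists_L_iff_pd src tgt).trans ⟨pack_eq_of_pd, pd_of_pack_eq⟩
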